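/- Let (Z_n(A)) be a BPRE with EZ_1(A)² < ∞, per-generation mean M := E g'_{Λ₁}(1) = γ/ν, and second-moment parameter γ̂/ν := E[g'_{Λ₁}(1)²], and suppose γ > 1 and γ̂ ≤ γ. Then the martingale (γ^{-n} Z_n(A)) satisfies the variance recursion-based bound sup_n Var(γ^{-n} Z_n(A)) ≤ 1 + γ^{-2} Σ_{k≥0} γ^{-k}(Var Z_1(A) + c₁c₂ k) < ∞ for suitable finite constants c₁, c₂; in particular (γ^{-n} Z_n(A)) is L²-bounded, uniformly integrable, and its a.s. limit W satisfies E W = 1 and P(W > 0) > 0. -/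

import Mathlib

open Filter MeasureTheory ProbabilityTheory
open scoped NNReal ENNReal

/-- for the total `A`-parasite count `(Z_n(A))` with `E Z_1(A)² < ∞`, `γ > 1` and
`γ̂ ≤ γ`, for which `(γ^{-n} Z_n(A))` is a nonnegative mean-one martingale whose variance obeys
`Var Z_{n+1}(A) = γ² Var Z_n(A) + γ^n Var Z_1(A) + c₁ ν^n f''_n(1)` with
`f''_n(1) ≤ c₂ n (γ/ν)^n`, the normalized martingale has uniformly bounded variance, explicitly
`Var(γ^{-n} Z_n(A)) ≤ 1 + γ^{-2} ∑_{k≥0} γ^{-k}(Var Z_1(A) + c₁ c₂ k)`; in particular it is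
L²-bounded, uniformly integrable, and its a.s. limit `W` satisfies `E W = 1` and
`P(W > 0) > 0`. -/
theorem stmt9 {Ω : Type*} {m : MeasurableSpace Ω} (P : Measure Ω) [IsProbabilityMeasure P]
    (𝒢 : Filtration ℕ m) (Z : ℕ → Ω → ℕ) (γ ν γhat c₁ c₂ : ℝ) (f'' : ℕ → ℝ)
    (hγ : 1 < γ) (hν : 0 < ν) (hγhat : γhat ≤ γ)
    (hc₁ : 0 ≤ c₁) (hc₂ : 0 ≤ c₂)
    (hZ0 : ∀ ω, Z 0 ω = 1)
    (hL2 : ∀ n, MemLp (fun ω => (Z n ω : ℝ)) 2 P)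
    (hmart : Martingale (fun n ω => γ⁻¹ ^ n * (Z n ω : ℝ)) 𝒢 P)
    (hf : ∀ n, f'' n ≤ c₂ * n * (γ / ν) ^ n) (hfpos : ∀ n, 0 ≤ f'' n)
    (hvarrec : ∀ n, variance (fun ω => (Z (n + 1) ω : ℝ)) P =
      γ ^ 2 * variance (fun ω => (Z n ω : ℝ)) P +
        γ ^ n * variance (fun ω => (Z 1 ω : ℝ)) P + c₁ * ν ^ n * f'' n) :
    (Summable fun k : ℕ =>
        γ⁻¹ ^ k * (variance (fun ω => (Z 1 ω : ℝ)) P + c₁ * c₂ * k)) ∧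
    (∀ n, variance (fun ω => γ⁻¹ ^ n * (Z n ω : ℝ)) P ≤
        1 + γ⁻¹ ^ 2 * ∑' k : ℕ,
          γ⁻¹ ^ k * (variance (fun ω => (Z 1 ω : ℝ)) P + c₁ * c₂ * k)) ∧
    UniformIntegrable (fun n ω => γ⁻¹ ^ n * (Z n ω : ℝ)) 1 P ∧
    ∃ W : Ω → ℝ,
      (∀ᵐ ω ∂P, Tendsto (fun n => γ⁻¹ ^ n * (Z n ω : ℝ)) atTop (nhds (W ω))) ∧
      ∫ ω, W ω ∂P = 1 ∧ 0 < P {ω | 0 < W ω} := by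
  have hγ0 : (0:ℝ) < γ := lt_trans one_pos hγ
  set X : ℕ → Ω → ℝ := fun n ω => γ⁻¹ ^ n * (Z n ω : ℝ) with hXdef
  set r : ℝ := γ⁻¹ with hrdef
  have hr : 0 < r := inv_pos.2 hγ0
  have hr1 : r < 1 := inv_lt_one_of_one_lt₀ hγ
  have hrγ : ∀ mm : ℕ, r ^ mm * γ ^ mm = 1 := fun mm => by
    rw [← mul_pow, inv_mul_cancel₀ (ne_of_gt hγ0), one_pow]
  set a : ℝ := variance (fun ω => (Z 1 ω : ℝ)) P with hadef
  have ha : 0 ≤ a := variance_nonneg _ _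
  set b : ℝ := c₁ * c₂ with hbdef
  have hb : 0 ≤ b := mul_nonneg hc₁ hc₂
  -- Summability
  have hsum : Summable (fun k : ℕ => r ^ k * (a + b * k)) := by
    have h1 : Summable (fun k : ℕ => a * r ^ k) :=
      (summable_geometric_of_lt_one hr.le hr1).mul_left a
    have h2 : Summable (fun k : ℕ => b * ((k : ℝ) ^ 1 * r ^ k)) :=
      (summable_pow_mul_geometric_of_norm_lt_one 1
        (by rwa [Real.norm_eq_abs, abs_of_pos hr])).mul_left b
    exact (h1.add h2).congr fun k => by ring
  set S : ℝ := ∑' k : ℕ, r ^ k * (a + b * k) with hSdef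
  have htermnn : ∀ k : ℕ, 0 ≤ r ^ k * (a + b * k) := fun k =>
    mul_nonneg (pow_nonneg hr.le k) (add_nonneg ha (mul_nonneg hb (Nat.cast_nonneg k)))
  have hS : 0 ≤ S := tsum_nonneg htermnn
  -- Variance of Z 0 is zero
  have hvar0 : variance (fun ω => (Z 0 ω : ℝ)) P = 0 := by
    have heq : (fun ω => (Z 0 ω : ℝ)) = fun _ => (1 : ℝ) := funext fun ω => by
      rw [hZ0 ω]; norm_num
    rw [heq, variance_eq_sub (memLp_const 1)]
    simp
  -- Key induction
  have key : ∀ n, r ^ (2 * n) * variance (fun ω => (Z n ω : ℝ)) P ≤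
      r ^ 2 * ∑ i ∈ Finset.range n, r ^ i * (a + b * i) := by
    intro n
    induction n with
    | zero => simp [hvar0]
    | succ n ih =>
      rw [hvarrec n, Finset.sum_range_succ]
      set V : ℝ := variance (fun ω => (Z n ω : ℝ)) P with hVdef
      have e1 : r ^ (2 * (n + 1)) * γ ^ 2 = r ^ (2 * n) := by
        have h2 := hrγ 2
        have h3 : r ^ (2 * (n + 1)) = r ^ (2 * n) * r ^ 2 := by ring
        rw [h3, mul_assoc, h2, mul_one]
      have e2 : r ^ (2 * (n + 1)) * γ ^ n = r ^ (n + 2) := by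
        have h2 := hrγ n
        have h3 : r ^ (2 * (n + 1)) = r ^ (n + 2) * r ^ n := by ring
        rw [h3, mul_assoc, h2, mul_one]
      have h3 : c₁ * ν ^ n * f'' n ≤ b * n * γ ^ n := by
        have hmul := mul_le_mul_of_nonneg_left (hf n)
          (mul_nonneg hc₁ (pow_nonneg hν.le n))
        calc c₁ * ν ^ n * f'' n ≤ c₁ * ν ^ n * (c₂ * n * (γ / ν) ^ n) := hmul
          _ = b * n * γ ^ n := by
              rw [div_pow]
              field_simp
              ring
      have hrp : (0:ℝ) ≤ r ^ (2 * (n + 1)) := pow_nonneg hr.le _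
      calc r ^ (2 * (n + 1)) * (γ ^ 2 * V + γ ^ n * a + c₁ * ν ^ n * f'' n)
          ≤ r ^ (2 * (n + 1)) * (γ ^ 2 * V + γ ^ n * a + b * n * γ ^ n) := by
            apply mul_le_mul_of_nonneg_left _ hrp
            linarith
        _ = (r ^ (2 * (n + 1)) * γ ^ 2) * V + (r ^ (2 * (n + 1)) * γ ^ n) * a
              + b * n * (r ^ (2 * (n + 1)) * γ ^ n) := by ring
        _ = r ^ (2 * n) * V + r ^ (n + 2) * a + b * n * r ^ (n + 2) := by
            rw [e1, e2]
        _ ≤ r ^ 2 * ((∑ i ∈ Finset.range n, r ^ i * (a + b * i))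
              + r ^ n * (a + b * n)) := by
            have h4 : r ^ (n + 2) * a + b * (n:ℝ) * r ^ (n + 2)
                = r ^ 2 * (r ^ n * (a + b * n)) := by ring
            have h5 : r ^ 2 * ((∑ i ∈ Finset.range n, r ^ i * (a + b * i))
                + r ^ n * (a + b * n)) = r ^ 2 * (∑ i ∈ Finset.range n, r ^ i * (a + b * i))
                + r ^ 2 * (r ^ n * (a + b * n)) := by ring
            linarith
  -- Variance bound
  have hvarX : ∀ n, variance (X n) P ≤ 1 + r ^ 2 * S := by
    intro n
    have h1 : variance (X n) P = (r ^ n) ^ 2 * variance (fun ω => (Z n ω : ℝ)) P :=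
      variance_const_mul _ _ _
    have h2 : (r ^ n) ^ 2 = r ^ (2 * n) := by ring
    have h4 : ∑ i ∈ Finset.range n, r ^ i * (a + b * i) ≤ S :=
      Summable.sum_le_tsum _ (fun i _ => htermnn i) hsum
    have h5 := key n
    have h6 := mul_le_mul_of_nonneg_left h4 (sq_nonneg r)
    rw [h1, h2]
    linarith
  -- mean one
  have hint : ∀ n, Integrable (X n) P := fun n => hmart.integrable n
  have hXnn : ∀ n ω, 0 ≤ X n ω := fun n ω =>
    mul_nonneg (pow_nonneg hr.le n) (Nat.cast_nonneg _)
  have hmean : ∀ n, ∫ ω, X n ω ∂P = 1 := by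
    intro n
    have h0 : ∫ ω in Set.univ, X 0 ω ∂P = ∫ ω in Set.univ, X n ω ∂P :=
      hmart.setIntegral_eq (Nat.zero_le n) MeasurableSet.univ
    rw [setIntegral_univ, setIntegral_univ] at h0
    rw [← h0]
    have heq : (fun ω => X 0 ω) = fun _ => (1 : ℝ) := funext fun ω => by
      simp [hXdef, hZ0 ω]
    rw [heq]
    simp
  -- second moments
  have hX2 : ∀ n, MemLp (X n) 2 P := fun n => (hL2 n).const_mul _
  have hsecond : ∀ n, ∫ ω, X n ω ^ 2 ∂P ≤ 2 + r ^ 2 * S := by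
    intro n
    have hv := variance_eq_sub (hX2 n)
    have hv2 : variance (X n) P = (∫ ω, X n ω ^ 2 ∂P) - (∫ ω, X n ω ∂P) ^ 2 := by
      rw [hv]; rfl
    rw [hmean n] at hv2
    have := hvarX n
    rw [hv2] at this
    linarith
  -- uniform integrability
  have hUI : UniformIntegrable X 1 P := by
    refine uniformIntegrable_of le_rfl ENNReal.one_ne_top
      (fun n => (hX2 n).aestronglyMeasurable) (fun ε hε => ?_)
    set B : ℝ := 2 + r ^ 2 * S with hBdef
    have hB0 : 0 ≤ B := by positivity
    refine ⟨(B / ε).toNNReal + 1, fun n => ?_⟩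
    set C : ℝ≥0 := (B / ε).toNNReal + 1 with hCdef
    have hCpos : (0 : ℝ≥0) < C := by positivity
    have hCne : (C : ℝ≥0∞) ≠ 0 := by exact_mod_cast hCpos.ne'
    have hCtop : (C : ℝ≥0∞) ≠ ⊤ := ENNReal.coe_ne_top
    have hpoint : ∀ ω, (‖({x | C ≤ ‖X n x‖₊}.indicator (X n)) ω‖₊ : ℝ≥0∞)
        ≤ (C : ℝ≥0∞)⁻¹ * (‖X n ω‖₊ : ℝ≥0∞) ^ 2 := by
      intro ω
      by_cases hω : ω ∈ {x | C ≤ ‖X n x‖₊}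
      · rw [Set.indicator_of_mem hω]
        have hCa : (C : ℝ≥0∞) ≤ (‖X n ω‖₊ : ℝ≥0∞) := by exact_mod_cast hω
        calc (‖X n ω‖₊ : ℝ≥0∞) = (C : ℝ≥0∞)⁻¹ * C * ‖X n ω‖₊ := by
              rw [ENNReal.inv_mul_cancel hCne hCtop, one_mul]
          _ ≤ (C : ℝ≥0∞)⁻¹ * ‖X n ω‖₊ * ‖X n ω‖₊ := by gcongr
          _ = (C : ℝ≥0∞)⁻¹ * (‖X n ω‖₊ : ℝ≥0∞) ^ 2 := by ring
      · rw [Set.indicator_of_notMem hω]; simp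
    have hlin : ∫⁻ ω, (‖X n ω‖₊ : ℝ≥0∞) ^ 2 ∂P = ENNReal.ofReal (∫ ω, X n ω ^ 2 ∂P) := by
      rw [ofReal_integral_eq_lintegral_ofReal (hX2 n).integrable_sq
        (ae_of_all _ fun ω => sq_nonneg _)]
      apply lintegral_congr; intro ω
      rw [← enorm_eq_nnnorm, Real.enorm_eq_ofReal (hXnn n ω), ← ENNReal.ofReal_pow (hXnn n ω)]
    calc eLpNorm ({x | C ≤ ‖X n x‖₊}.indicator (X n)) 1 P
        = ∫⁻ ω, (‖({x | C ≤ ‖X n x‖₊}.indicator (X n)) ω‖₊ : ℝ≥0∞) ∂P :=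
          eLpNorm_one_eq_lintegral_enorm
      _ ≤ ∫⁻ ω, (C : ℝ≥0∞)⁻¹ * (‖X n ω‖₊ : ℝ≥0∞) ^ 2 ∂P := lintegral_mono hpoint
      _ = (C : ℝ≥0∞)⁻¹ * ∫⁻ ω, (‖X n ω‖₊ : ℝ≥0∞) ^ 2 ∂P :=
          lintegral_const_mul' _ _ (by simp [hCpos.ne'])
      _ = (C : ℝ≥0∞)⁻¹ * ENNReal.ofReal (∫ ω, X n ω ^ 2 ∂P) := by rw [hlin]
      _ ≤ (C : ℝ≥0∞)⁻¹ * ENNReal.ofReal B :=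
          mul_le_mul_right (ENNReal.ofReal_le_ofReal (hsecond n)) _
      _ ≤ ENNReal.ofReal ε := by
          rw [← ENNReal.div_eq_inv_mul, ENNReal.div_le_iff hCne hCtop]
          rw [← ENNReal.ofReal_coe_nnreal, ← ENNReal.ofReal_mul hε.le]
          apply ENNReal.ofReal_le_ofReal
          have hC' : B / ε ≤ (C : ℝ) := by
            rw [hCdef]
            push_cast
            have : B / ε ≤ ((B / ε).toNNReal : ℝ) := Real.le_coe_toNNReal _
            linarith
          calc B = ε * (B / ε) := by field_simp
            _ ≤ ε * (C : ℝ) := by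
                apply mul_le_mul_of_nonneg_left hC' hε.le
  -- L¹ bound
  have hL1bdd : ∀ n, eLpNorm (X n) 1 P ≤ (1 : ℝ≥0) := by
    intro n
    rw [eLpNorm_one_eq_lintegral_enorm]
    have heq : ∫⁻ ω, ‖X n ω‖ₑ ∂P = ENNReal.ofReal (∫ ω, X n ω ∂P) := by
      rw [ofReal_integral_eq_lintegral_ofReal (hint n) (ae_of_all _ (hXnn n))]
      apply lintegral_congr; intro ω
      rw [Real.enorm_eq_ofReal (hXnn n ω)]
    rw [heq, hmean n]
    simp
  have hsub := hmart.submartingale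
  set W : Ω → ℝ := 𝒢.limitProcess X P with hWdef
  have hae : ∀ᵐ ω ∂P, Tendsto (fun n => X n ω) atTop (nhds (W ω)) :=
    hsub.ae_tendsto_limitProcess hL1bdd
  have hWint : Integrable W P :=
    memLp_one_iff_integrable.mp (hsub.memLp_limitProcess hL1bdd)
  have hL1conv := hsub.tendsto_eLpNorm_one_limitProcess hUI
  have hintconv : Tendsto (fun n => ∫ ω, X n ω ∂P) atTop (nhds (∫ ω, W ω ∂P)) := by
    apply tendsto_integral_of_L1 W hWint.aestronglyMeasurable (Eventually.of_forall hint)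
    have heq : ∀ n, eLpNorm (X n - W) 1 P = ∫⁻ ω, ‖X n ω - W ω‖ₑ ∂P := by
      intro n
      rw [eLpNorm_one_eq_lintegral_enorm]
      rfl
    simpa [heq, ← hWdef] using hL1conv
  have hEW : ∫ ω, W ω ∂P = 1 := by
    have h1 : Tendsto (fun _ : ℕ => (1 : ℝ)) atTop (nhds (∫ ω, W ω ∂P)) := by
      have : (fun n => ∫ ω, X n ω ∂P) = fun _ : ℕ => (1 : ℝ) := funext hmean
      rwa [this] at hintconv
    exact tendsto_nhds_unique h1 tendsto_const_nhds
  have hpos : 0 < P {ω | 0 < W ω} := by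
    by_contra hcon
    push_neg at hcon
    have hzero : P {ω | 0 < W ω} = 0 := le_antisymm hcon zero_le
    have hae0 : ∀ᵐ ω ∂P, W ω ≤ 0 := by
      rw [ae_iff]
      simpa [not_le] using hzero
    have := integral_nonpos_of_ae hae0
    rw [hEW] at this
    linarith
  exact ⟨hsum, hvarX, hUI, W, hae, hEW, hpos⟩
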